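/- For all a ∈ ℕ and L ≥ 1, if L ≥ ⌊a/2⌋ then Φ(a, L) = ⌊a/2⌋. -/
import Mathlib


/-- `f x = max {y : ℕ | y * (y + 1) ≤ x}`. -/
def f (x : ℕ) : ℕ := Nat.findGreatest (fun y => y * (y + 1) ≤ x) x

/-- `Phi a L = max {f a₁ + ⋯ + f a_L : a₁ + ⋯ + a_L ≤ a}`. -/
noncomputable def Phi (a L : ℕ) : ℕ :=
  sSup {s | ∃ g : Fin L → ℕ, (∑ i, g i) ≤ a ∧ s = ∑ i, f (g i)}

lemma f_zero : f 0 = 0 := rfl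

lemma f_two : f 2 = 1 := by decide

lemma two_mul_f_le (x : ℕ) : 2 * f x ≤ x := by
  rcases Nat.eq_zero_or_pos (f x) with h0 | h0
  · simp [h0]
  · have hs : f x * (f x + 1) ≤ x :=
      Nat.findGreatest_of_ne_zero (P := fun y => y * (y + 1) ≤ x) (n := x) (m := f x) rfl
        (by omega)
    calc 2 * f x = f x * 2 := by ring
    _ ≤ f x * (f x + 1) := by
        apply Nat.mul_le_mul_left
        omega
    _ ≤ x := hs

theorem Phi_eq_half_of_le (a L : ℕ) (hL : 1 ≤ L) (h : a / 2 ≤ L) : Phi a L = a / 2 := by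
  have hub : ∀ s ∈ {s | ∃ g : Fin L → ℕ, (∑ i, g i) ≤ a ∧ s = ∑ i, f (g i)}, s ≤ a / 2 := by
    rintro s ⟨g, hg, rfl⟩
    rw [Nat.le_div_iff_mul_le (by norm_num)]
    calc (∑ i, f (g i)) * 2 = ∑ i, 2 * f (g i) := by
          rw [Finset.sum_mul]; exact Finset.sum_congr rfl fun i _ => by ring
    _ ≤ ∑ i, g i := Finset.sum_le_sum fun i _ => two_mul_f_le (g i)
    _ ≤ a := hg
  apply le_antisymm
  · exact csSup_le ⟨0, 0, by simp, by simp [f_zero]⟩ hub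
  · apply le_csSup ⟨a / 2, hub⟩
    refine ⟨fun i => if (i : ℕ) < a / 2 then 2 else 0, ?_, ?_⟩
    · have : (∑ i : Fin L, if (i : ℕ) < a / 2 then 2 else 0) = 2 * (a / 2) := by
        rw [Fin.sum_univ_eq_sum_range (fun i => if i < a / 2 then 2 else 0)]
        rw [Finset.sum_ite, Finset.sum_const_zero, add_zero, Finset.sum_const, smul_eq_mul]
        have : (Finset.range L).filter (· < a / 2) = Finset.range (a / 2) := by
          ext x
          simp [Finset.mem_filter, Finset.mem_range]
          omega
        rw [this]
        simp [mul_comm]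
      rw [this]
      omega
    · have : (∑ i : Fin L, f (if (i : ℕ) < a / 2 then 2 else 0)) = a / 2 := by
        rw [Fin.sum_univ_eq_sum_range (fun i => f (if i < a / 2 then 2 else 0))]
        have : ∀ i, f (if i < a / 2 then 2 else 0) = if i < a / 2 then 1 else 0 := by
          intro i; split <;> simp [f_two, f_zero]
        simp only [this]
        rw [Finset.sum_ite, Finset.sum_const_zero, add_zero, Finset.sum_const, smul_eq_mul]
        have : (Finset.range L).filter (· < a / 2) = Finset.range (a / 2) := by
          ext x
          simp [Finset.mem_filter, Finset.mem_range]
          omega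
        rw [this]
        simp
      exact this.symm
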